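/- For φ(x) = x² + x + μ with μ ∈ ℤ, the 2-adic valuation of φ^∘n(−1/2) is −2^n for every n ≥ 1; in particular the orbit of −1/2 under φ is infinite. -/

import Mathlib

private lemma step_lemma (μ : ℤ) {q : ℚ} (hv : padicValRat 2 q < 0) :
    padicValRat 2 (q ^ 2 + q + (μ : ℚ)) = 2 * padicValRat 2 q := by
  have hq : q ≠ 0 := by rintro rfl; simp [padicValRat] at hv
  have hμnn : (0:ℤ) ≤ padicValRat 2 (μ : ℚ) := by
    rw [padicValRat.of_int]; exact Int.natCast_nonneg _
  -- valuation of q + μ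
  have hsum_ne : q + (μ : ℚ) ≠ 0 := by
    intro h
    have : q = (-μ : ℤ) := by push_cast; linarith
    rw [this] at hv
    have h0 : (0:ℤ) ≤ padicValRat 2 ((-μ : ℤ) : ℚ) := by
      rw [padicValRat.of_int]; exact Int.natCast_nonneg _
    omega
  have hv1 : padicValRat 2 (q + (μ : ℚ)) = padicValRat 2 q := by
    by_cases hμ : (μ : ℚ) = 0
    · simp [hμ]
    · rw [padicValRat.add_eq_min hsum_ne hq hμ (by omega)]
      exact min_eq_left (by omega)
  have hq2 : (q ^ 2 : ℚ) ≠ 0 := pow_ne_zero _ hq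
  have hvq2 : padicValRat 2 (q ^ 2) = 2 * padicValRat 2 q := by
    rw [padicValRat.pow q]; push_cast; ring
  have hne : q ^ 2 + (q + (μ : ℚ)) ≠ 0 := by
    intro h
    have h2 : q ^ 2 = -(q + (μ : ℚ)) := by linarith
    have hneg : padicValRat 2 (-(q + (μ : ℚ))) = padicValRat 2 q := by
      rw [padicValRat.neg]; exact hv1
    have := hvq2.symm.trans (h2 ▸ hneg)
    omega
  have : q ^ 2 + q + (μ : ℚ) = q ^ 2 + (q + (μ : ℚ)) := by ring
  rw [this, padicValRat.add_eq_min hne hq2 hsum_ne (by omega), hvq2, hv1]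
  exact min_eq_left (by omega)

private lemma val_iter (μ : ℤ) (n : ℕ) :
    padicValRat 2 ((fun x : ℚ => x ^ 2 + x + (μ : ℚ))^[n] (-(1/2))) = -(2 ^ n) := by
  induction n with
  | zero =>
      simp only [Function.iterate_zero, id_eq, pow_zero]
      rw [show (-(1/2) : ℚ) = -((2:ℕ):ℚ)⁻¹ by norm_num, padicValRat.neg, padicValRat.inv,
        padicValRat.self one_lt_two]
  | succ n ih =>
      rw [Function.iterate_succ_apply']
      have hv : padicValRat 2 ((fun x : ℚ => x ^ 2 + x + (μ : ℚ))^[n] (-(1/2))) < 0 := by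
        rw [ih]
        have : (0:ℤ) < 2 ^ n := by positivity
        omega
      rw [step_lemma μ hv, ih]
      ring

/-- For `φ(x) = x² + x + μ` with `μ ∈ ℤ`, the `2`-adic valuation of
`φ^∘n(−1/2)` is `−2^n` for every `n ≥ 1`; in particular the orbit of `−1/2` under `φ` is
infinite. -/
theorem stmt_15 (μ : ℤ) :
    (∀ n : ℕ, 1 ≤ n →
      padicValRat 2 ((fun x : ℚ => x ^ 2 + x + (μ : ℚ))^[n] (-(1/2))) = -(2 ^ n))
    ∧ (Set.range fun n : ℕ =>
        (fun x : ℚ => x ^ 2 + x + (μ : ℚ))^[n] (-(1/2))).Infinite := by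
  refine ⟨fun n _ => val_iter μ n, ?_⟩
  have hinj : Function.Injective
      (fun n : ℕ => (fun x : ℚ => x ^ 2 + x + (μ : ℚ))^[n] (-(1/2))) := by
    intro a b hab
    dsimp only at hab
    have := (val_iter μ a).symm.trans ((congrArg (padicValRat 2) hab).trans (val_iter μ b))
    have h2 : (2:ℤ) ^ a = 2 ^ b := by linarith
    exact Nat.pow_right_injective le_rfl (by exact_mod_cast h2)
  exact Set.infinite_range_of_injective hinj
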